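/- Fix r ∈ ℕ and A ⊆ ℕ. Let J be the type of all 2-colored graphs on vertex sets Fin n (i.e. Σ n : ℕ, SimpleGraph (Fin n) × (Fin 2 → Set (Fin n))) whose underlying graph is r-regular (every vertex has degree exactly r; this includes the empty graph). Then there exist two functions g₁, g₂ : J → ℝ such that for every X ∈ J the row of X in the join matrix H(g_A^r, η̄_{1,2}), namely the function J → ℝ sending Y to g_A^r applied to the underlying graph of η̄_{1,2}(X,Y), lies in the ℝ-linear span of {g₁, g₂}; that is, this restricted join matrix of g_A^r has rank at most 2. -/

import Mathlib

/-- Same-side adjacency on the disjoint union of two graphs. -/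
def sumAdj {V₁ V₂ : Type*} (G₁ : SimpleGraph V₁) (G₂ : SimpleGraph V₂) :
    V₁ ⊕ V₂ → V₁ ⊕ V₂ → Prop
  | Sum.inl a, Sum.inl b => G₁.Adj a b
  | Sum.inr a, Sum.inr b => G₂.Adj a b
  | _, _ => False

lemma sumAdj_symm {V₁ V₂ : Type*} (G₁ : SimpleGraph V₁) (G₂ : SimpleGraph V₂)
    {u v : V₁ ⊕ V₂} (h : sumAdj G₁ G₂ u v) : sumAdj G₁ G₂ v u := by
  cases u <;> cases v <;> simp_all [sumAdj] <;> exact h.symm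

/-- The disjoint union of two simple graphs. -/
def sumGraph {V₁ V₂ : Type*} (G₁ : SimpleGraph V₁) (G₂ : SimpleGraph V₂) :
    SimpleGraph (V₁ ⊕ V₂) where
  Adj := sumAdj G₁ G₂
  symm := ⟨fun _ _ h => sumAdj_symm G₁ G₂ h⟩
  loopless := ⟨fun u => by cases u <;> simp [sumAdj]⟩

/-- The coloring of the disjoint union of two `k`-colored graphs. -/
def joinColor {k : ℕ} {V₁ V₂ : Type*} (C₁ : Fin k → Set V₁) (C₂ : Fin k → Set V₂)
    (ℓ : Fin k) : Set (V₁ ⊕ V₂) :=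
  Sum.inl '' C₁ ℓ ∪ Sum.inr '' C₂ ℓ

/-- The underlying graph of the `(i,j)`-join of two `k`-colored graphs. -/
def joinGraph {k : ℕ} (i j : Fin k) {V₁ V₂ : Type*}
    (G₁ : SimpleGraph V₁) (C₁ : Fin k → Set V₁)
    (G₂ : SimpleGraph V₂) (C₂ : Fin k → Set V₂) : SimpleGraph (V₁ ⊕ V₂) where
  Adj u v := u ≠ v ∧ (sumAdj G₁ G₂ u v ∨
    (u ∈ joinColor C₁ C₂ i ∧ v ∈ joinColor C₁ C₂ j) ∨
    (u ∈ joinColor C₁ C₂ j ∧ v ∈ joinColor C₁ C₂ i))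
  symm := ⟨fun u v => fun ⟨hne, h⟩ => ⟨hne.symm, by
    rcases h with h | h | h
    · exact Or.inl (sumAdj_symm G₁ G₂ h)
    · exact Or.inr (Or.inr ⟨h.2, h.1⟩)
    · exact Or.inr (Or.inl ⟨h.2, h.1⟩)⟩⟩
  loopless := ⟨fun u h => h.1 rfl⟩


/-- A graph is `r`-regular if every vertex has exactly `r` neighbors. -/
def RegularDeg {V : Type*} (r : ℕ) (G : SimpleGraph V) : Prop :=
  ∀ v : V, (G.neighborSet v).ncard = r

open Classical in
/-- The graph parameter `g_A^r`: the number of vertices if the graph is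
`r`-regular, connected, with number of vertices in `A`, and `0` otherwise. -/
noncomputable def gAr (r : ℕ) (A : Set ℕ) {V : Type*} [Fintype V] (G : SimpleGraph V) : ℝ :=
  if RegularDeg r G ∧ G.Connected ∧ Fintype.card V ∈ A then (Fintype.card V : ℝ) else 0

/-- `2`-colored graphs on vertex sets `Fin n` whose underlying graph is
`r`-regular. -/
def Jdx (r : ℕ) :=
  {X : Σ n : ℕ, SimpleGraph (Fin n) × (Fin 2 → Set (Fin n)) // RegularDeg r X.2.1}


-- key zero lemma
lemma gAr_join_eq_zero (r : ℕ) (A : Set ℕ) {V₁ V₂ : Type*} [Fintype V₁] [Fintype V₂]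
    [Nonempty V₁] [Nonempty V₂] {i j : Fin 2}
    (G₁ : SimpleGraph V₁) (C₁ : Fin 2 → Set V₁)
    (G₂ : SimpleGraph V₂) (C₂ : Fin 2 → Set V₂)
    (h₁ : RegularDeg r G₁) :
    gAr r A (joinGraph i j G₁ C₁ G₂ C₂) = 0 := by
  set J := joinGraph i j G₁ C₁ G₂ C₂ with hJ
  rw [gAr, if_neg]
  rintro ⟨hreg, hconn, -⟩
  by_cases hc : ∃ (a : V₁) (b : V₂), J.Adj (Sum.inl a) (Sum.inr b)
  · obtain ⟨a, b, hab⟩ := hc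
    have hsub : insert (Sum.inr b) (Sum.inl '' G₁.neighborSet a) ⊆ J.neighborSet (Sum.inl a) := by
      rintro x (rfl | ⟨y, hy, rfl⟩)
      · exact hab
      · refine ⟨by simpa using (G₁.ne_of_adj hy), Or.inl ?_⟩
        simpa [sumAdj] using hy
    have hcard : (insert (Sum.inr b) (Sum.inl '' G₁.neighborSet a)).ncard = r + 1 := by
      rw [Set.ncard_insert_of_notMem (by simp) (Set.toFinite _),
        Set.ncard_image_of_injective _ Sum.inl_injective, h₁ a]
    have := Set.ncard_le_ncard hsub (Set.toFinite _)
    rw [hcard, hreg (Sum.inl a)] at this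
    omega
  · push_neg at hc
    have hside : ∀ {x y : V₁ ⊕ V₂}, J.Adj x y → x.isLeft = y.isLeft := by
      rintro (a | a) (b | b) h <;> simp
      · exact hc a b h
      · exact hc b a h.symm
    have hreach : ∀ {x y : V₁ ⊕ V₂}, J.Reachable x y → x.isLeft = y.isLeft := by
      rintro x y ⟨p⟩
      induction p with
      | nil => rfl
      | cons h _ ih => exact (hside h).trans ih
    have := hreach (hconn.preconnected (Sum.inl (Classical.arbitrary V₁)) (Sum.inr (Classical.arbitrary V₂)))
    simp at this


def Jempty (r : ℕ) : Jdx r := ⟨⟨0, ⊥, fun _ => ∅⟩, fun v => v.elim0⟩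

lemma jdx_eq_empty (r : ℕ) (X : Jdx r) (h : X.1.1 = 0) : X = Jempty r := by
  obtain ⟨⟨n, G, C⟩, hX⟩ := X
  dsimp at h; subst h
  apply Subtype.ext
  show (⟨0, G, C⟩ : Σ n : ℕ, SimpleGraph (Fin n) × (Fin 2 → Set (Fin n))) = ⟨0, ⊥, fun _ => ∅⟩
  congr 1
  refine Prod.ext ?_ ?_
  · ext v w; exact v.elim0
  · funext ℓ; ext v; exact v.elim0

theorem gAr_join_matrix_rank_le_two (r : ℕ) (A : Set ℕ) :
    ∃ g₁ g₂ : Jdx r → ℝ, ∀ X : Jdx r,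
      (fun Y : Jdx r =>
        gAr r A (joinGraph (0 : Fin 2) (1 : Fin 2) X.1.2.1 X.1.2.2 Y.1.2.1 Y.1.2.2)) ∈
        Submodule.span ℝ ({g₁, g₂} : Set (Jdx r → ℝ)) := by
  classical
  refine ⟨fun Y => gAr r A (joinGraph (0 : Fin 2) (1 : Fin 2) (Jempty r).1.2.1 (Jempty r).1.2.2
      Y.1.2.1 Y.1.2.2),
    fun Y => if Y.1.1 = 0 then 1 else 0, fun X => ?_⟩
  by_cases hX : X.1.1 = 0
  · rw [jdx_eq_empty r X hX]
    exact Submodule.subset_span (Set.mem_insert _ _)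
  · rw [Submodule.mem_span_pair]
    refine ⟨0, gAr r A (joinGraph (0 : Fin 2) (1 : Fin 2) X.1.2.1 X.1.2.2
      (Jempty r).1.2.1 (Jempty r).1.2.2), ?_⟩
    funext Y
    simp only [Pi.add_apply, Pi.smul_apply, smul_eq_mul, zero_smul, Pi.zero_apply, zero_add]
    by_cases hY : Y.1.1 = 0
    · rw [jdx_eq_empty r Y hY]
      simp [Jempty]
    · haveI : Nonempty (Fin X.1.1) := ⟨⟨0, Nat.pos_of_ne_zero hX⟩⟩
      haveI : Nonempty (Fin Y.1.1) := ⟨⟨0, Nat.pos_of_ne_zero hY⟩⟩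
      rw [if_neg hY, mul_zero]
      exact (gAr_join_eq_zero r A (V₁ := Fin X.1.1) (V₂ := Fin Y.1.1) X.1.2.1 X.1.2.2 Y.1.2.1 Y.1.2.2 X.2).symm
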